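/- Let H be a real Hilbert space and u, g : (0, ∞) → H functions satisfying, for all λ, λ' > 0, the identity (λ + λ')⟨u(λ), u(λ')⟩ = ‖g(λ) − g(λ')‖² + λ‖u(λ)‖² + λ'‖u(λ')‖². Then the function λ ↦ ‖u(λ)‖ is monotone decreasing on (0, ∞), i.e. for all 0 < λ' ≤ λ one has ‖u(λ)‖ ≤ ‖u(λ')‖. -/
import Mathlib

open RealInnerProductSpace

theorem stmt_3
    {H : Type*} [NormedAddCommGroup H] [InnerProductSpace ℝ H] [CompleteSpace H]
    (u g : ℝ → H)
    (hid : ∀ l l' : ℝ, 0 < l → 0 < l' →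
      (l + l') * ⟪u l, u l'⟫ =
        ‖g l - g l'‖ ^ 2 + l * ‖u l‖ ^ 2 + l' * ‖u l'‖ ^ 2) :
    ∀ l l' : ℝ, 0 < l' → l' ≤ l → ‖u l‖ ≤ ‖u l'‖ := by
  intro l l' hl' hle
  by_contra h
  push_neg at h
  have hl : 0 < l := lt_of_lt_of_le hl' hle
  have hcs := real_inner_le_norm (u l) (u l')
  have hid' := hid l l' hl hl'
  have hg : 0 ≤ ‖g l - g l'‖ ^ 2 := sq_nonneg _
  have h1 : 0 ≤ ‖u l'‖ := norm_nonneg _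
  have key : l * ‖u l‖ ^ 2 + l' * ‖u l'‖ ^ 2 ≤ (l + l') * (‖u l‖ * ‖u l'‖) := by
    have := mul_le_mul_of_nonneg_left hcs (add_pos hl hl').le
    linarith
  have ha : 0 < ‖u l‖ := lt_of_le_of_lt h1 h
  have hpos : 0 < l * ‖u l‖ - l' * ‖u l'‖ := by nlinarith
  nlinarith [mul_pos (sub_pos.mpr h) hpos]
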